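/- Let 𝔤 be a finite-dimensional real 2-step nilpotent Lie algebra, let V ⊆ 𝔤 be a subspace with 𝔤 = V ⊕ [𝔤,𝔤] (internal direct sum of vector spaces), let ρ be an inner product on V, let |·| be a norm on [𝔤,𝔤], and set m := dim [𝔤,𝔤]. Then there exists K > 0 such that for every ζ ∈ [𝔤,𝔤] there exist x₁,…,x_m ∈ V, y₁,…,y_m ∈ V and α₁,…,α_m ≥ 0 with: (i) ρ(x_k,x_k) = ρ(y_k,y_k) = 1 for every 1 ≤ k ≤ m; (ii) ρ(x_k,y_k) = 0 for every 1 ≤ k ≤ m; (iii) ζ = Σ_{k=1}^m α_k ⁅x_k,y_k⁆; (iv) Σ_{k=1}^m α_k ≤ K|ζ|. -/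

import Mathlib

set_option maxHeartbeats 1000000
set_option synthInstance.maxHeartbeats 400000


lemma aux_anti {L : Type*} [AddCommGroup L] [Module ℝ L]
    (bracket : L →ₗ[ℝ] L →ₗ[ℝ] L) (halt : ∀ x : L, bracket x x = 0) (x y : L) :
    bracket y x = - bracket x y := by
  have h := halt (x + y)
  simp only [map_add, LinearMap.add_apply, halt] at h
  exact eq_neg_of_add_eq_zero_left (by rw [← h]; abel)

lemma aux_nrm_sum {L : Type*} [AddCommGroup L] [Module ℝ L] (D : Submodule ℝ L)
    (nrm : L → ℝ) (h0 : nrm 0 = 0)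
    (hn4 : ∀ z ∈ D, ∀ w ∈ D, nrm (z + w) ≤ nrm z + nrm w)
    {ι : Type*} (s : Finset ι) (v : ι → L) (hv : ∀ i, v i ∈ D) :
    nrm (∑ i ∈ s, v i) ≤ ∑ i ∈ s, nrm (v i) := by
  induction s using Finset.cons_induction with
  | empty => simp [h0]
  | cons i s hi ih =>
    rw [Finset.sum_cons, Finset.sum_cons]
    exact le_trans (hn4 _ (hv i) _ (Submodule.sum_mem D fun j _ => hv j)) (by linarith)

lemma aux_spanT {L : Type*} [AddCommGroup L] [Module ℝ L]
    (bracket : L →ₗ[ℝ] L →ₗ[ℝ] L)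
    (halt : ∀ x : L, bracket x x = 0)
    (h2step : ∀ x y z : L, bracket (bracket x y) z = 0)
    (D : Submodule ℝ L) (hD : D = Submodule.span ℝ {z : L | ∃ x y : L, z = bracket x y})
    (V : Submodule ℝ L) (hVD : IsCompl V D)
    (ρ : L →ₗ[ℝ] L →ₗ[ℝ] ℝ)
    (hpos : ∀ x ∈ V, x ≠ 0 → 0 < ρ x x) :
    D ≤ Submodule.span ℝ {z : L | ∃ p q : L, p ∈ V ∧ q ∈ V ∧
      ρ p p = 1 ∧ ρ q q = 1 ∧ ρ p q = 0 ∧ z = bracket p q} := by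
  set T := {z : L | ∃ p q : L, p ∈ V ∧ q ∈ V ∧
      ρ p p = 1 ∧ ρ q q = 1 ∧ ρ p q = 0 ∧ z = bracket p q} with hT
  -- D elements kill bracket
  have hker : ∀ d ∈ D, bracket d = 0 := by
    intro d hd
    rw [hD] at hd
    induction hd using Submodule.span_induction with
    | mem z hz => obtain ⟨x, y, rfl⟩ := hz; ext w; exact h2step x y w
    | zero => simp
    | add a b _ _ ha hb => rw [map_add, ha, hb, add_zero]
    | smul c a _ ha => rw [map_smul, ha, smul_zero]
  have hker2 : ∀ d ∈ D, ∀ z : L, bracket z d = 0 := by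
    intro d hd z
    simp [aux_anti bracket halt d z, hker d hd]
  -- reduce to V×V brackets
  rw [hD, Submodule.span_le]
  rintro _ ⟨x, y, rfl⟩
  obtain ⟨v, hv, d, hd, rfl⟩ := Submodule.mem_sup.mp
    (by rw [hVD.sup_eq_top]; exact Submodule.mem_top : x ∈ V ⊔ D)
  obtain ⟨w, hw, e, he, rfl⟩ := Submodule.mem_sup.mp
    (by rw [hVD.sup_eq_top]; exact Submodule.mem_top : y ∈ V ⊔ D)
  have hred : bracket (v + d) (w + e) = bracket v w := by
    simp only [map_add, LinearMap.add_apply, hker d hd, LinearMap.zero_apply,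
      add_zero, zero_add, hker2 e he]
  rw [hred]
  -- now Gram–Schmidt on v, w ∈ V
  by_cases hbz : bracket v w = 0
  · rw [hbz]; exact Submodule.zero_mem _
  have hv0 : v ≠ 0 := by rintro rfl; simp at hbz
  have ha : 0 < ρ v v := hpos v hv hv0
  set w' := w - (ρ v w / ρ v v) • v with hw'def
  have hw'V : w' ∈ V := Submodule.sub_mem V hw (Submodule.smul_mem V _ hv)
  have hw'0 : w' ≠ 0 := by
    intro h0
    apply hbz
    rw [hw'def, sub_eq_zero] at h0
    rw [h0, map_smul, halt, smul_zero]
  have hb : 0 < ρ w' w' := hpos w' hw'V hw'0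
  have hbr : bracket v w' = bracket v w := by
    rw [hw'def, map_sub, map_smul, halt, smul_zero, sub_zero]
  have hortho : ρ v w' = 0 := by
    rw [hw'def, map_sub, map_smul, smul_eq_mul]
    rw [div_mul_cancel₀ _ ha.ne', sub_self]
  set sa := Real.sqrt (ρ v v) with hsa
  set sb := Real.sqrt (ρ w' w') with hsb
  have hsa0 : 0 < sa := Real.sqrt_pos.mpr ha
  have hsb0 : 0 < sb := Real.sqrt_pos.mpr hb
  have hsaa : sa * sa = ρ v v := Real.mul_self_sqrt ha.le
  have hsbb : sb * sb = ρ w' w' := Real.mul_self_sqrt hb.le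
  have hmem : bracket (sa⁻¹ • v) (sb⁻¹ • w') ∈ T := by
    refine ⟨sa⁻¹ • v, sb⁻¹ • w', Submodule.smul_mem V _ hv, Submodule.smul_mem V _ hw'V,
      ?_, ?_, ?_, rfl⟩
    · simp only [map_smul, LinearMap.smul_apply, smul_eq_mul]
      field_simp
      linarith [hsaa]
    · simp only [map_smul, LinearMap.smul_apply, smul_eq_mul]
      field_simp
      linarith [hsbb]
    · simp only [map_smul, LinearMap.smul_apply, smul_eq_mul, hortho, mul_zero]
  have : bracket v w = (sa * sb) • bracket (sa⁻¹ • v) (sb⁻¹ • w') := by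
    rw [map_smul, map_smul, LinearMap.smul_apply, hbr, smul_smul, smul_smul]
    rw [show sa * sb * sb⁻¹ * sa⁻¹ = 1 by field_simp, one_smul]
  rw [this]
  exact Submodule.smul_mem _ _ (Submodule.subset_span hmem)

/-- in a 2-step nilpotent Lie algebra `𝔤 = V ⊕ [𝔤,𝔤]`, with an inner product `ρ`
on `V` and a norm `nrm` on `[𝔤,𝔤]` of dimension `m`, there is `K > 0` so that every
`ζ ∈ [𝔤,𝔤]` can be written as `ζ = Σ α_k ⁅x_k,y_k⁆` with `x_k, y_k ∈ V` orthonormal pairs,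
`α_k ≥ 0` and `Σ α_k ≤ K·nrm ζ`. -/
theorem stmt_2 {L : Type*} [NormedAddCommGroup L] [NormedSpace ℝ L] [FiniteDimensional ℝ L]
    (bracket : L →ₗ[ℝ] L →ₗ[ℝ] L)
    (halt : ∀ x : L, bracket x x = 0)
    (h2step : ∀ x y z : L, bracket (bracket x y) z = 0)
    -- the derived subalgebra `[𝔤,𝔤]`, the span of all brackets
    (D : Submodule ℝ L) (hD : D = Submodule.span ℝ {z : L | ∃ x y : L, z = bracket x y})
    -- `𝔤 = V ⊕ [𝔤,𝔤]` as an internal direct sum of vector spaces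
    (V : Submodule ℝ L) (hVD : IsCompl V D)
    -- `ρ` is an inner product on `V`
    (ρ : L →ₗ[ℝ] L →ₗ[ℝ] ℝ)
    (hsym : ∀ x ∈ V, ∀ y ∈ V, ρ x y = ρ y x)
    (hpos : ∀ x ∈ V, x ≠ 0 → 0 < ρ x x)
    -- `nrm` is a norm on `[𝔤,𝔤]`
    (nrm : L → ℝ)
    (hn1 : ∀ z ∈ D, 0 ≤ nrm z)
    (hn2 : ∀ z ∈ D, nrm z = 0 → z = 0)
    (hn3 : ∀ (c : ℝ), ∀ z ∈ D, nrm (c • z) = |c| * nrm z)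
    (hn4 : ∀ z ∈ D, ∀ w ∈ D, nrm (z + w) ≤ nrm z + nrm w) :
    ∃ K > (0:ℝ), ∀ ζ ∈ D,
      ∃ x y : Fin (Module.finrank ℝ D) → L, ∃ α : Fin (Module.finrank ℝ D) → ℝ,
        (∀ k, x k ∈ V) ∧ (∀ k, y k ∈ V) ∧ (∀ k, 0 ≤ α k) ∧
        (∀ k, ρ (x k) (x k) = 1) ∧ (∀ k, ρ (y k) (y k) = 1) ∧
        (∀ k, ρ (x k) (y k) = 0) ∧
        ζ = ∑ k, α k • bracket (x k) (y k) ∧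
        (∑ k, α k) ≤ K * nrm ζ := by
  classical
  have hn0 : nrm (0 : L) = 0 := by
    have := hn3 0 0 D.zero_mem
    simpa using this
  by_cases hm0 : Module.finrank ℝ D = 0
  · -- trivial case: D = ⊥
    refine ⟨1, one_pos, fun ζ hζ => ?_⟩
    have hDbot : D = ⊥ := Submodule.finrank_eq_zero.mp hm0
    have hz : ζ = 0 := by rw [hDbot] at hζ; simpa using hζ
    haveI : IsEmpty (Fin (Module.finrank ℝ D)) := by rw [hm0]; infer_instance
    refine ⟨fun k => isEmptyElim k, fun k => isEmptyElim k, fun k => isEmptyElim k,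
      fun k => isEmptyElim k, fun k => isEmptyElim k, fun k => isEmptyElim k,
      fun k => isEmptyElim k, fun k => isEmptyElim k, ?_, ?_⟩
    · simp [hz]
    · simp [hz, hn0]
  -- main case
  set T := {z : L | ∃ p q : L, p ∈ V ∧ q ∈ V ∧
      ρ p p = 1 ∧ ρ q q = 1 ∧ ρ p q = 0 ∧ z = bracket p q} with hT
  have hDT : D ≤ Submodule.span ℝ T := aux_spanT bracket halt h2step D hD V hVD ρ hpos
  have hTD : Submodule.span ℝ T ≤ D := by
    rw [Submodule.span_le, hD]
    rintro _ ⟨p, q, _, _, _, _, _, rfl⟩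
    exact Submodule.subset_span ⟨p, q, rfl⟩
  have hspanT : Submodule.span ℝ T = D := le_antisymm hTD hDT
  obtain ⟨s, hsT, hsspan, hsli⟩ := exists_linearIndependent ℝ T
  haveI : Fintype s := (hsli.setFinite).fintype
  have hspan_s : Submodule.span ℝ (Set.range ((↑) : s → L)) = D := by
    rw [Subtype.range_coe, hsspan, hspanT]
  let B1 : Module.Basis s ℝ D :=
    (Module.Basis.span hsli).map (LinearEquiv.ofEq _ _ hspan_s)
  have hB1 : ∀ j : s, ((B1 j : L)) ∈ T := by
    intro j
    have : ((B1 j : L)) = (j : L) := by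
      simp [B1, Module.Basis.map_apply, LinearEquiv.coe_ofEq_apply, Module.Basis.span_apply]
    rw [this]
    exact hsT j.2
  have hcard : Fintype.card s = Module.finrank ℝ D :=
    (Module.finrank_eq_card_basis B1).symm
  let e : s ≃ Fin (Module.finrank ℝ D) := Fintype.equivFinOfCardEq hcard
  let B : Module.Basis (Fin (Module.finrank ℝ D)) ℝ D := B1.reindex e
  have hBT : ∀ k, ((B k : L)) ∈ T := by
    intro k
    rw [show B k = B1 (e.symm k) from B1.reindex_apply e k]
    exact hB1 _
  choose p q hpV hqV hpp hqq hpq hBpq using hBT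
  -- coordinate functionals
  let f : Fin (Module.finrank ℝ D) → (D →L[ℝ] ℝ) :=
    fun k => LinearMap.toContinuousLinearMap (B.coord k)
  have hrep : ∀ (z : D) k, |B.repr z k| ≤ ‖f k‖ * ‖z‖ := by
    intro z k
    have := (f k).le_opNorm z
    simpa [f, Real.norm_eq_abs] using this
  have hsum : ∀ z : D, (z : L) = ∑ k, B.repr z k • ((B k : L)) := by
    intro z
    have := congrArg (Subtype.val) (B.sum_repr z)
    rw [Submodule.coe_sum] at this
    simpa using this.symm
  -- upper bound for nrm
  have hBD : ∀ k, ((B k : L)) ∈ D := fun k => (B k).2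
  set M := ∑ k, ‖f k‖ * nrm (B k) with hM
  have hgM : ∀ z : D, nrm ↑z ≤ M * ‖z‖ := by
    intro z
    rw [hsum z]
    calc nrm (∑ k, B.repr z k • ((B k : L)))
        ≤ ∑ k, nrm (B.repr z k • ((B k : L))) :=
          aux_nrm_sum D nrm hn0 hn4 _ _ (fun k => Submodule.smul_mem D _ (hBD k))
      _ = ∑ k, |B.repr z k| * nrm (B k) := by
          refine Finset.sum_congr rfl fun k _ => hn3 _ _ (hBD k)
      _ ≤ ∑ k, (‖f k‖ * ‖z‖) * nrm (B k) :=
          Finset.sum_le_sum fun k _ =>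
            mul_le_mul_of_nonneg_right (hrep z k) (hn1 _ (hBD k))
      _ = M * ‖z‖ := by
          rw [hM, Finset.sum_mul]
          exact Finset.sum_congr rfl fun k _ => by ring
  -- Lipschitz continuity of nrm on D
  have hM0 : 0 ≤ M := Finset.sum_nonneg fun k _ =>
    mul_nonneg (ContinuousLinearMap.opNorm_nonneg _) (hn1 _ (hBD k))
  have hlip : LipschitzWith (Real.toNNReal M) (fun z : D => nrm ↑z) := by
    apply LipschitzWith.of_dist_le_mul
    intro z w
    rw [Real.dist_eq, dist_eq_norm, Real.coe_toNNReal M hM0]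
    have hzw : ((z - w : D) : L) ∈ D := (z - w).2
    have h1 : nrm ↑z - nrm ↑w ≤ nrm ((z - w : D) : L) := by
      have h := hn4 _ hzw _ w.2
      have : ((z - w : D) : L) + (w : L) = (z : L) := by
        push_cast; abel
      rw [this] at h
      linarith
    have h2 : nrm ↑w - nrm ↑z ≤ nrm ((z - w : D) : L) := by
      have h := hn4 _ (Submodule.neg_mem D hzw) _ z.2
      have heq : (-((z - w : D) : L)) + (z : L) = (w : L) := by
        push_cast; abel
      rw [heq] at h
      have hneg : nrm (-((z - w : D) : L)) = nrm ((z - w : D) : L) := by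
        have := hn3 (-1) _ hzw
        simpa using this
      linarith
    have h3 : |nrm ↑z - nrm ↑w| ≤ nrm ((z - w : D) : L) := abs_le.mpr ⟨by linarith, h1⟩
    exact h3.trans (hgM (z - w))
  -- minimum of nrm on the unit sphere of D
  have hDne : ∃ z0 : D, z0 ≠ 0 := by
    by_contra h
    push_neg at h
    apply hm0
    have : D = ⊥ := by
      rw [Submodule.eq_bot_iff]
      intro x hx
      have := h ⟨x, hx⟩
      simpa [Subtype.ext_iff] using this
    rw [this]
    simp
  obtain ⟨z0, hz0⟩ := hDne
  have hu0 : (‖z0‖⁻¹ • z0) ∈ Metric.sphere (0 : D) 1 := by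
    rw [mem_sphere_zero_iff_norm, norm_smul, norm_inv, norm_norm]
    exact inv_mul_cancel₀ (norm_ne_zero_iff.mpr hz0)
  obtain ⟨zmin, hzminS, hmin⟩ := (isCompact_sphere (0 : D) 1).exists_isMinOn
    ⟨_, hu0⟩ (hlip.continuous.continuousOn)
  have hmin : ∀ u ∈ Metric.sphere (0 : D) 1, nrm ↑zmin ≤ nrm ↑u := fun u hu => hmin hu
  have hzmin1 : ‖zmin‖ = 1 := mem_sphere_zero_iff_norm.mp hzminS
  set c0 := nrm ↑zmin with hc0def
  have hc0 : 0 < c0 := by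
    rcases (hn1 _ zmin.2).lt_or_eq with h | h
    · exact h
    · exfalso
      have : (zmin : L) = 0 := hn2 _ zmin.2 h.symm
      have : zmin = 0 := Subtype.ext this
      rw [this] at hzmin1
      simp at hzmin1
  have hlow : ∀ z : D, c0 * ‖z‖ ≤ nrm ↑z := by
    intro z
    by_cases hz : z = 0
    · rw [hz]; simp [hn0]
    · have hnz : ‖z‖ ≠ 0 := norm_ne_zero_iff.mpr hz
      have hu : (‖z‖⁻¹ • z) ∈ Metric.sphere (0 : D) 1 := by
        rw [mem_sphere_zero_iff_norm, norm_smul, norm_inv, norm_norm]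
        exact inv_mul_cancel₀ hnz
      have hmin' := hmin _ hu
      have hz_eq : (z : L) = ‖z‖ • ((‖z‖⁻¹ • z : D) : L) := by
        push_cast
        rw [smul_smul, mul_inv_cancel₀ hnz, one_smul]
      have : nrm ↑z = ‖z‖ * nrm ((‖z‖⁻¹ • z : D) : L) := by
        rw [hz_eq, hn3 _ _ (‖z‖⁻¹ • z).2, abs_of_nonneg (norm_nonneg z)]
      rw [this]
      calc c0 * ‖z‖ ≤ nrm ((‖z‖⁻¹ • z : D) : L) * ‖z‖ :=
            mul_le_mul_of_nonneg_right hmin' (norm_nonneg z)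
        _ = ‖z‖ * nrm ((‖z‖⁻¹ • z : D) : L) := mul_comm _ _
  -- final assembly
  set A := ∑ k, ‖f k‖ with hA
  have hA0 : 0 ≤ A := Finset.sum_nonneg fun k _ => ContinuousLinearMap.opNorm_nonneg _
  refine ⟨(A + 1) / c0, div_pos (by linarith) hc0, fun ζ hζ => ?_⟩
  set z : D := ⟨ζ, hζ⟩ with hzdef
  set c : Fin (Module.finrank ℝ D) → ℝ := fun k => B.repr z k with hcdef
  refine ⟨fun k => if 0 ≤ c k then p k else q k,
          fun k => if 0 ≤ c k then q k else p k,
          fun k => |c k|, ?_, ?_, ?_, ?_, ?_, ?_, ?_, ?_⟩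
  · intro k; dsimp only; split_ifs; exacts [hpV k, hqV k]
  · intro k; dsimp only; split_ifs; exacts [hqV k, hpV k]
  · intro k; exact abs_nonneg _
  · intro k; dsimp only; split_ifs; exacts [hpp k, hqq k]
  · intro k; dsimp only; split_ifs; exacts [hqq k, hpp k]
  · intro k; dsimp only; split_ifs with h
    · exact hpq k
    · rw [hsym (q k) (hqV k) (p k) (hpV k)]; exact hpq k
  · -- representation
    have hterm : ∀ k, |c k| • bracket (if 0 ≤ c k then p k else q k)
        (if 0 ≤ c k then q k else p k) = c k • ((B k : L)) := by
      intro k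
      by_cases h : 0 ≤ c k
      · rw [if_pos h, if_pos h, abs_of_nonneg h, hBpq k]
      · rw [if_neg h, if_neg h, abs_of_neg (not_le.mp h),
          aux_anti bracket halt (p k) (q k), ← hBpq k, smul_neg, neg_smul, neg_neg]
    calc ζ = (z : L) := rfl
      _ = ∑ k, c k • ((B k : L)) := hsum z
      _ = ∑ k, |c k| • bracket (if 0 ≤ c k then p k else q k)
            (if 0 ≤ c k then q k else p k) :=
          (Finset.sum_congr rfl fun k _ => (hterm k).symm)
  · -- the bound
    have h1 : ∑ k, |c k| ≤ A * ‖z‖ := by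
      calc ∑ k, |c k| ≤ ∑ k, ‖f k‖ * ‖z‖ := Finset.sum_le_sum fun k _ => hrep z k
        _ = A * ‖z‖ := by rw [hA, Finset.sum_mul]
    have h2 : c0 * ‖z‖ ≤ nrm ζ := hlow z
    have h3 : 0 ≤ nrm ζ := hn1 ζ hζ
    have h4 : 0 ≤ ‖z‖ := norm_nonneg z
    rw [div_mul_eq_mul_div, le_div_iff₀ hc0]
    nlinarith [mul_le_mul_of_nonneg_left h2 hA0, mul_le_mul_of_nonneg_right h1 hc0.le]
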